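/- Let g(z) = -z^3(7z-4)/(4z-7). For every z with |z| < 1, the iterates g^n(z) converge to 0. Moreover |g^n(z)| ≤ |z|^{3^n} for all n ≥ 1. -/

import Mathlib

lemma key_aux (g : ℂ → ℂ) (hg : ∀ z : ℂ, g z = -z ^ 3 * (7 * z - 4) / (4 * z - 7)) :
    ∀ z : ℂ, ‖z‖ ≤ 1 → ‖g z‖ ≤ ‖z‖ ^ 3 := by
  intro z hz
  have hnormSq : Complex.normSq z ≤ 1 := by
    rw [← Complex.sq_norm]; nlinarith [norm_nonneg z]
  have hden : (4 : ℂ) * z - 7 ≠ 0 := by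
    intro h
    have hz7 : z = 7 / 4 := by
      field_simp at h ⊢; linear_combination h
    rw [hz7] at hz
    simp [map_div₀] at hz
    norm_num at hz
  have hfrac : ‖7 * z - 4‖ ≤ ‖4 * z - 7‖ := by
    rw [← pow_le_pow_iff_left₀ (norm_nonneg _) (norm_nonneg _) (two_ne_zero)]
    rw [Complex.sq_norm, Complex.sq_norm]
    simp only [Complex.normSq_apply, Complex.sub_re, Complex.sub_im, Complex.mul_re,
      Complex.mul_im, Complex.ofReal_re]
    have h2 : z.re ^ 2 + z.im ^ 2 ≤ 1 := by
      have := hnormSq; simp [Complex.normSq_apply] at this; nlinarith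
    norm_num
    nlinarith
  rw [hg, norm_div, norm_mul, norm_neg, norm_pow]
  rw [div_le_iff₀ (norm_pos_iff.mpr hden)]
  calc ‖z‖ ^ 3 * ‖7 * z - 4‖
      ≤ ‖z‖ ^ 3 * ‖4 * z - 7‖ := by
        apply mul_le_mul_of_nonneg_left hfrac (by positivity)
    _ = _ := by ring

/-- For g(z) = -z^3(7z-4)/(4z-7) and |z| < 1, the iterates g^[n] z converge to 0,
and |g^[n] z| ≤ |z|^(3^n) for n ≥ 1. -/
theorem stmt_2 (g : ℂ → ℂ) (hg : ∀ z : ℂ, g z = -z ^ 3 * (7 * z - 4) / (4 * z - 7)) :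
    ∀ z : ℂ, ‖z‖ < 1 →
      Filter.Tendsto (fun n : ℕ => g^[n] z) Filter.atTop (nhds 0) ∧
      ∀ n : ℕ, 1 ≤ n → ‖g^[n] z‖ ≤ ‖z‖ ^ (3 ^ n) := by
  intro z hz
  have hz0 : 0 ≤ ‖z‖ := norm_nonneg z
  have hbound : ∀ n : ℕ, 1 ≤ n → ‖g^[n] z‖ ≤ ‖z‖ ^ (3 ^ n) := by
    intro n hn
    induction n with
    | zero => omega
    | succ m ih =>
      rcases Nat.eq_or_lt_of_le hn with h | h
      · -- m = 0
        have hm : m = 0 := by omega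
        subst hm
        simpa using key_aux g hg z hz.le
      · have hm : 1 ≤ m := by omega
        have ihm := ih hm
        have hle1 : ‖g^[m] z‖ ≤ 1 := by
          calc ‖g^[m] z‖ ≤ ‖z‖ ^ (3 ^ m) := ihm
            _ ≤ 1 := pow_le_one₀ hz0 hz.le
        have hstep := key_aux g hg (g^[m] z) hle1
        rw [Function.iterate_succ_apply']
        calc ‖g (g^[m] z)‖ ≤ ‖g^[m] z‖ ^ 3 := hstep
          _ ≤ (‖z‖ ^ (3 ^ m)) ^ 3 := by
              apply pow_le_pow_left₀ (norm_nonneg _) ihm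
          _ = ‖z‖ ^ (3 ^ (m + 1)) := by
              rw [← pow_mul]; ring_nf
  refine ⟨?_, hbound⟩
  rw [tendsto_zero_iff_norm_tendsto_zero]
  apply squeeze_zero' (Filter.Eventually.of_forall fun n => norm_nonneg _)
  · filter_upwards [Filter.eventually_ge_atTop 1] with n hn
    calc ‖g^[n] z‖ ≤ ‖z‖ ^ (3 ^ n) := hbound n hn
      _ ≤ ‖z‖ ^ n :=
        pow_le_pow_of_le_one hz0 hz.le (Nat.le_of_lt (Nat.lt_pow_self (by norm_num)))
  · exact tendsto_pow_atTop_nhds_zero_of_lt_one hz0 hz
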